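/- (Lemma 4 of the paper) Fix n > 0 and 0 < w < w'. Then the ratio θ ↦ Ψ̄_n(θw) / Ψ̄_n(θw') is monotonically increasing in θ > 0. -/

import Mathlib

open Real Set MeasureTheory Filter intervalIntegral
open scoped ENNReal

/-- Chi-squared density with `n > 0` degrees of freedom. -/
noncomputable def chiPDF (n y : ℝ) : ℝ :=
  if 0 < y then Real.exp (-y / 2) * y ^ (n / 2 - 1) / (2 ^ (n / 2) * Real.Gamma (n / 2)) else 0

/-- Chi-squared survival function `Ψ̄_n`. -/
noncomputable def chiSurv (n x : ℝ) : ℝ := ∫ t in Set.Ioi x, chiPDF n t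

section aux

variable {n : ℝ}

lemma chiC_pos (hn : 0 < n) : 0 < (2:ℝ) ^ (n/2) * Real.Gamma (n/2) :=
  mul_pos (Real.rpow_pos_of_pos two_pos _) (Real.Gamma_pos_of_pos (by linarith))

lemma chiPDF_pos (hn : 0 < n) {y : ℝ} (hy : 0 < y) : 0 < chiPDF n y := by
  rw [chiPDF, if_pos hy]
  exact div_pos (mul_pos (Real.exp_pos _) (Real.rpow_pos_of_pos hy _)) (chiC_pos hn)

lemma chiPDF_nonneg (hn : 0 < n) (y : ℝ) : 0 ≤ chiPDF n y := by
  rw [chiPDF]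
  split_ifs with h
  · have := chiC_pos hn
    positivity
  · exact le_rfl

lemma chiPDF_eq_indicator :
    chiPDF n = Set.indicator (Set.Ioi 0)
      (fun y => Real.exp (-y / 2) * y ^ (n / 2 - 1) / (2 ^ (n / 2) * Real.Gamma (n / 2))) := by
  funext y
  rw [chiPDF, Set.indicator]
  simp only [Set.mem_Ioi]

lemma chiPDF_integrable (hn : 0 < n) : Integrable (chiPDF n) := by
  rw [chiPDF_eq_indicator, integrable_indicator_iff measurableSet_Ioi]
  have h := integrableOn_rpow_mul_exp_neg_mul_rpow (p := 1) (s := n/2 - 1) (b := 1/2)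
    (by linarith) one_pos (by norm_num)
  have h2 : IntegrableOn (fun y : ℝ => Real.exp (-y / 2) * y ^ (n / 2 - 1)) (Set.Ioi 0) := by
    refine h.congr_fun (fun y hy => ?_) measurableSet_Ioi
    dsimp only; rw [Real.rpow_one, mul_comm]
    ring_nf
  exact h2.div_const _

lemma chiSurv_pos (hn : 0 < n) (x : ℝ) : 0 < chiSurv n x := by
  rw [chiSurv, setIntegral_pos_iff_support_of_nonneg_ae
    (ae_of_all _ (chiPDF_nonneg hn)) ((chiPDF_integrable hn).integrableOn)]
  have hsub : Set.Ioi (max x 0) ⊆ Function.support (chiPDF n) ∩ Set.Ioi x := by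
    intro y hy
    rw [Set.mem_Ioi, max_lt_iff] at hy
    exact ⟨(chiPDF_pos hn hy.2).ne', hy.1⟩
  calc (0:ℝ≥0∞) < volume (Set.Ioi (max x 0)) := by simp [Real.volume_Ioi]
    _ ≤ _ := measure_mono hsub

lemma chiPDF_measurable : Measurable (chiPDF n) := by
  rw [chiPDF_eq_indicator]
  exact (Measurable.mul (by fun_prop) (measurable_id.pow_const _)).div_const _
    |>.indicator measurableSet_Ioi

lemma chiSurv_sub (hn : 0 < n) (a b : ℝ) :
    chiSurv n b = chiSurv n a - ∫ t in a..b, chiPDF n t := by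
  have key : ∀ a b : ℝ, a ≤ b → chiSurv n a = (∫ t in a..b, chiPDF n t) + chiSurv n b := by
    intro a b hab
    rw [intervalIntegral.integral_of_le hab, chiSurv, chiSurv,
      ← setIntegral_union (Set.Ioc_disjoint_Ioi le_rfl) measurableSet_Ioi
        ((chiPDF_integrable hn).integrableOn) ((chiPDF_integrable hn).integrableOn),
      Set.Ioc_union_Ioi_eq_Ioi hab]
  rcases le_total a b with hab | hba
  · rw [key a b hab]; ring
  · rw [key b a hba, intervalIntegral.integral_symm]; ring

lemma chiPDF_continuousAt (hn : 0 < n) {x : ℝ} (hx : 0 < x) :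
    ContinuousAt (chiPDF n) x := by
  have hmem : Set.Ioi (0:ℝ) ∈ nhds x := Ioi_mem_nhds hx
  have heq : (fun y => Real.exp (-y / 2) * y ^ (n / 2 - 1) / (2 ^ (n / 2) * Real.Gamma (n / 2)))
      =ᶠ[nhds x] chiPDF n := by
    filter_upwards [hmem] with y hy
    rw [chiPDF]
    exact (if_pos hy).symm
  refine ContinuousAt.congr ?_ heq
  exact ContinuousAt.div_const
    (ContinuousAt.mul (by fun_prop) (Real.continuousAt_rpow_const _ _ (Or.inl hx.ne'))) _

lemma hasDerivAt_chiSurv (hn : 0 < n) {x : ℝ} (hx : 0 < x) :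
    HasDerivAt (chiSurv n) (-(chiPDF n x)) x := by
  have hfun : chiSurv n = fun y => chiSurv n 0 - ∫ t in (0:ℝ)..y, chiPDF n t :=
    funext fun y => chiSurv_sub hn 0 y
  rw [hfun]
  have hInt : HasDerivAt (fun u => ∫ t in (0:ℝ)..u, chiPDF n t) (chiPDF n x) x := by
    refine intervalIntegral.integral_hasDerivAt_right
      ((chiPDF_integrable hn).intervalIntegrable)
      (chiPDF_measurable.stronglyMeasurable.stronglyMeasurableAtFilter)
      (chiPDF_continuousAt hn hx)
  simpa using hInt.const_sub (chiSurv n 0)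

lemma integral_exp_shift {k x : ℝ} (hk : 0 < k) :
    ∫ t in Set.Ioi x, Real.exp (-k * (t - x)) = 1 / k := by
  have hderiv : ∀ t : ℝ, HasDerivAt (fun t => -(1/k) * Real.exp (-k*(t-x)))
      (Real.exp (-k*(t-x))) t := by
    intro t
    have h1 : HasDerivAt (fun t : ℝ => -k*(t-x)) (-k) t := by
      simpa using ((hasDerivAt_id t).sub_const x).const_mul (-k)
    have h2 := (Real.hasDerivAt_exp (-k*(t-x))).comp t h1
    refine (h2.const_mul (-(1/k))).congr_deriv (Eq.symm ?_)
    field_simp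
  have hint : IntegrableOn (fun t => Real.exp (-k * (t - x))) (Set.Ioi x) := by
    have h2 : IntegrableOn (fun t => Real.exp (k * x) * Real.exp (-k * t)) (Set.Ioi x) :=
      (exp_neg_integrableOn_Ioi x hk).const_mul (Real.exp (k * x))
    refine h2.congr_fun (fun t _ => ?_) measurableSet_Ioi
    dsimp only; rw [← Real.exp_add]
    ring_nf
  have htend : Tendsto (fun t => -(1/k) * Real.exp (-k*(t-x))) atTop (nhds 0) := by
    have h1 : Tendsto (fun t : ℝ => -k*(t-x)) atTop atBot := by
      refine Tendsto.const_mul_atTop_of_neg (by linarith) ?_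
      exact tendsto_atTop_add_const_right _ _ tendsto_id
    have := (Real.tendsto_exp_atBot.comp h1).const_mul (-(1/k))
    simpa using this
  have := MeasureTheory.integral_Ioi_of_hasDerivAt_of_tendsto
    (f := fun t => -(1/k) * Real.exp (-k*(t-x))) (f' := fun t => Real.exp (-k * (t - x)))
    ((hderiv x).continuousAt.continuousWithinAt) (fun t _ => hderiv t) hint htend
  rw [this]
  simp

lemma chiSurv_le (hn : 0 < n) {x : ℝ} (hx : 0 < x) (hnx : n ≤ x) :
    chiSurv n x ≤ chiPDF n x / (1/2 - max (n/2 - 1) 0 / x) := by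
  set a := n/2 - 1 with ha
  set k := 1/2 - max a 0 / x with hkdef
  have hk : 0 < k := by
    rcases le_or_gt a 0 with h | h
    · rw [hkdef, max_eq_right h]
      simp
    · rw [hkdef, max_eq_left h.le, sub_pos, div_lt_iff₀ hx]
      rw [ha] at h ⊢
      nlinarith
  have hpt : ∀ t ∈ Set.Ioi x, chiPDF n t ≤ chiPDF n x * Real.exp (-k * (t - x)) := by
    intro t ht
    rw [Set.mem_Ioi] at ht
    have htpos : 0 < t := hx.trans ht
    rw [chiPDF, chiPDF, if_pos htpos, if_pos hx]
    rw [div_mul_eq_mul_div, div_le_div_iff_of_pos_right (chiC_pos hn)]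
    have hratio : (t/x) ^ a ≤ Real.exp (max a 0 * (t - x) / x) := by
      rcases le_or_gt a 0 with h | h
      · rw [max_eq_right h]
        simp only [zero_mul, zero_div, Real.exp_zero]
        exact Real.rpow_le_one_of_one_le_of_nonpos
          ((one_le_div hx).mpr ht.le) h
      · rw [max_eq_left h.le]
        have hlog : Real.log (t/x) ≤ t/x - 1 :=
          Real.log_le_sub_one_of_pos (div_pos htpos hx)
        calc (t/x) ^ a = Real.exp (a * Real.log (t/x)) := by
              rw [← Real.log_rpow (div_pos htpos hx), Real.exp_log
                (Real.rpow_pos_of_pos (div_pos htpos hx) _)]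
          _ ≤ Real.exp (a * (t - x) / x) := by
              apply Real.exp_le_exp.mpr
              have : a * Real.log (t/x) ≤ a * (t/x - 1) :=
                mul_le_mul_of_nonneg_left hlog h.le
              calc a * Real.log (t/x) ≤ a * (t/x - 1) := this
                _ = a * (t - x) / x := by field_simp
    have hta : t ^ a = x ^ a * (t/x) ^ a := by
      rw [← Real.mul_rpow hx.le (by positivity)]
      congr 1
      field_simp
    rw [hta]
    calc Real.exp (-t/2) * (x ^ a * (t/x) ^ a)
        ≤ Real.exp (-t/2) * (x ^ a * Real.exp (max a 0 * (t - x) / x)) := by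
          apply mul_le_mul_of_nonneg_left _ (Real.exp_pos _).le
          exact mul_le_mul_of_nonneg_left hratio (Real.rpow_pos_of_pos hx _).le
      _ = Real.exp (-x/2) * x ^ a * Real.exp (-k * (t - x)) := by
          have hexp : Real.exp (-t/2) * Real.exp (max a 0 * (t - x) / x)
              = Real.exp (-x/2) * Real.exp (-k * (t - x)) := by
            rw [← Real.exp_add, ← Real.exp_add]
            congr 1
            rw [hkdef]
            field_simp
            ring
          linear_combination (x ^ a) * hexp
  have hintExp : IntegrableOn (fun t => chiPDF n x * Real.exp (-k * (t - x))) (Set.Ioi x) := by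
    refine Integrable.const_mul ?_ _
    have h2 : IntegrableOn (fun t => Real.exp (k * x) * Real.exp (-k * t)) (Set.Ioi x) :=
      (exp_neg_integrableOn_Ioi x hk).const_mul (Real.exp (k * x))
    refine h2.congr_fun (fun t _ => ?_) measurableSet_Ioi
    dsimp only; rw [← Real.exp_add]
    ring_nf
  calc chiSurv n x ≤ ∫ t in Set.Ioi x, chiPDF n x * Real.exp (-k * (t - x)) := by
        refine setIntegral_mono_on ((chiPDF_integrable hn).integrableOn) hintExp
          measurableSet_Ioi hpt
    _ = chiPDF n x * (1/k) := by rw [MeasureTheory.integral_const_mul, integral_exp_shift hk]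
    _ = chiPDF n x / k := by rw [mul_one_div]

lemma key_pos (hn : 0 < n) {x : ℝ} (hx : 0 < x) :
    0 < (n - x)/2 * chiSurv n x + x * chiPDF n x := by
  have hf := chiPDF_pos hn hx
  have hF := chiSurv_pos hn x
  rcases le_or_gt x n with h | h
  · have h1 : 0 ≤ (n - x)/2 * chiSurv n x := by
      apply mul_nonneg (by linarith) hF.le
    nlinarith
  · set k := 1/2 - max (n/2 - 1) 0 / x with hkdef
    have hk : 0 < k := by
      rcases le_or_gt (n/2 - 1) 0 with h' | h'
      · rw [hkdef, max_eq_right h']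
        simp
      · rw [hkdef, max_eq_left h'.le, sub_pos, div_lt_iff₀ hx]
        nlinarith
    have h1 : chiSurv n x ≤ chiPDF n x / k := chiSurv_le hn hx h.le
    have hxk : x - n < 2 * (x * k) := by
      have hx' : x ≠ 0 := hx.ne'
      have : x * k = x/2 - max (n/2 - 1) 0 := by
        rw [hkdef]
        field_simp
      rw [this]
      rcases le_or_gt (n/2 - 1) 0 with h' | h'
      · rw [max_eq_right h']; linarith
      · rw [max_eq_left h'.le]; linarith
    have h2 : (x - n)/2 * chiSurv n x ≤ (x - n)/2 * (chiPDF n x / k) :=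
      mul_le_mul_of_nonneg_left h1 (by linarith)
    have h3 : (x - n)/2 * (chiPDF n x / k) < x * chiPDF n x := by
      rw [div_mul_div_comm, div_lt_iff₀ (by positivity)]
      nlinarith
    linarith [h2.trans_lt h3]

lemma hasDerivAt_xpdf (hn : 0 < n) {x : ℝ} (hx : 0 < x) :
    HasDerivAt (fun y => y * chiPDF n y) (chiPDF n x * ((n - x)/2)) x := by
  set c := (2:ℝ) ^ (n/2) * Real.Gamma (n/2) with hc
  have hg : HasDerivAt (fun y : ℝ => Real.exp (-y/2) * y ^ (n/2) / c)
      (chiPDF n x * ((n - x)/2)) x := by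
    have h1 : HasDerivAt (fun y : ℝ => Real.exp (-y/2)) (Real.exp (-x/2) * (-1/2)) x := by
      have := (Real.hasDerivAt_exp (-x/2)).comp x
        (((hasDerivAt_id x).neg).div_const 2)
      exact this.congr_deriv (by ring)
    have h2 : HasDerivAt (fun y : ℝ => y ^ (n/2)) (n/2 * x ^ (n/2 - 1)) x :=
      Real.hasDerivAt_rpow_const (Or.inl hx.ne')
    have h3 := (h1.mul h2).div_const c
    refine h3.congr_deriv (Eq.symm ?_)
    rw [chiPDF, if_pos hx]
    have hc0 : c ≠ 0 := (chiC_pos hn).ne'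
    rw [← hc]
    have hxp : x ^ (n/2) = x ^ (n/2 - 1) * x := by
      rw [← Real.rpow_add_one hx.ne']
      ring_nf
    field_simp
    rw [hxp]
    ring
  refine hg.congr_of_eventuallyEq ?_
  filter_upwards [Ioi_mem_nhds hx] with y hy
  rw [chiPDF, if_pos (Set.mem_Ioi.mp hy)]
  have hyp : y ^ (n/2) = y ^ (n/2 - 1) * y := by
    rw [← Real.rpow_add_one (Set.mem_Ioi.mp hy).ne']
    ring_nf
  rw [hyp]
  ring

lemma hasDerivAt_hazard (hn : 0 < n) {x : ℝ} (hx : 0 < x) :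
    HasDerivAt (fun x => x * chiPDF n x / chiSurv n x)
      ((chiPDF n x * ((n - x)/2) * chiSurv n x - x * chiPDF n x * (-(chiPDF n x)))
        / (chiSurv n x)^2) x :=
  (hasDerivAt_xpdf hn hx).div (hasDerivAt_chiSurv hn hx) (chiSurv_pos hn x).ne'

lemma hazard_strictMono (hn : 0 < n) :
    StrictMonoOn (fun x => x * chiPDF n x / chiSurv n x) (Set.Ioi (0:ℝ)) := by
  apply strictMonoOn_of_deriv_pos (convex_Ioi 0)
  · intro x hx
    exact ((hasDerivAt_hazard hn hx).continuousAt).continuousWithinAt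
  · intro x hx
    rw [interior_Ioi] at hx
    rw [(hasDerivAt_hazard hn hx).deriv]
    have hf := chiPDF_pos hn hx
    have hF := chiSurv_pos hn x
    have hkey := key_pos hn hx
    have hnum : chiPDF n x * ((n - x)/2) * chiSurv n x - x * chiPDF n x * (-(chiPDF n x))
        = chiPDF n x * ((n - x)/2 * chiSurv n x + x * chiPDF n x) := by ring
    rw [hnum]
    positivity

end aux

/-- Lemma 4: for `0 < w < w'`, the ratio `θ ↦ Ψ̄_n(θw) / Ψ̄_n(θw')` is
monotonically increasing in `θ > 0`. -/
theorem chiSurv_ratio_strictMono (n w w' : ℝ) (hn : 0 < n) (hw : 0 < w) (hww' : w < w') :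
    StrictMonoOn (fun θ => chiSurv n (θ * w) / chiSurv n (θ * w')) (Set.Ioi (0 : ℝ)) := by
  have hw' : 0 < w' := hw.trans hww'
  have hR : ∀ θ : ℝ, 0 < θ → HasDerivAt (fun θ => chiSurv n (θ * w) / chiSurv n (θ * w'))
      ((-(chiPDF n (θ * w)) * w * chiSurv n (θ * w')
        - chiSurv n (θ * w) * (-(chiPDF n (θ * w')) * w')) / (chiSurv n (θ * w'))^2) θ := by
    intro θ hθ
    have h1 : HasDerivAt (fun θ : ℝ => chiSurv n (θ * w)) (-(chiPDF n (θ * w)) * w) θ :=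
      by have := (hasDerivAt_chiSurv hn (mul_pos hθ hw)).comp θ (hasDerivAt_mul_const w); exact this
    have h2 : HasDerivAt (fun θ : ℝ => chiSurv n (θ * w')) (-(chiPDF n (θ * w')) * w') θ :=
      by have := (hasDerivAt_chiSurv hn (mul_pos hθ hw')).comp θ (hasDerivAt_mul_const w'); exact this
    exact h1.div h2 (chiSurv_pos hn _).ne'
  apply strictMonoOn_of_deriv_pos (convex_Ioi 0)
  · intro θ hθ
    exact ((hR θ hθ).continuousAt).continuousWithinAt
  · intro θ hθ
    rw [interior_Ioi] at hθ
    rw [Set.mem_Ioi] at hθ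
    rw [(hR θ hθ).deriv]
    set a := θ * w with hadef
    set b := θ * w' with hbdef
    have ha : 0 < a := mul_pos hθ hw
    have hb : 0 < b := mul_pos hθ hw'
    have hab : a < b := by
      rw [hadef, hbdef]
      exact (mul_lt_mul_iff_right₀ hθ).mpr hww'
    have hfa := chiPDF_pos hn ha
    have hfb := chiPDF_pos hn hb
    have hFa := chiSurv_pos hn a
    have hFb := chiSurv_pos hn b
    have hH : a * chiPDF n a / chiSurv n a < b * chiPDF n b / chiSurv n b :=
      hazard_strictMono hn (Set.mem_Ioi.mpr ha) (Set.mem_Ioi.mpr hb) hab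
    rw [div_lt_div_iff₀ hFa hFb] at hH
    -- hH : a * chiPDF n a * chiSurv n b < b * chiPDF n b * chiSurv n a
    have hH' : w * chiPDF n a * chiSurv n b < w' * chiPDF n b * chiSurv n a := by
      rw [hadef, hbdef] at hH
      have := (mul_lt_mul_iff_right₀ hθ).mp (by nlinarith : θ * (w * chiPDF n a * chiSurv n b)
        < θ * (w' * chiPDF n b * chiSurv n a))
      exact this
    have hnum : 0 < -(chiPDF n a) * w * chiSurv n b - chiSurv n a * (-(chiPDF n b) * w') := by
      nlinarith
    positivity
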